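/- For all positive reals λ, λ', μ, μ', one has (1/B(λ,λ')) ∫₀¹ t^(λ-1)(1-t)^(λ'-1) I(μ,μ';t) dt = [B(λ+μ, λ')/(μ B(λ,λ') B(μ,μ'))] · ₃F₂(1−μ', μ, λ+μ; μ+1, λ+λ'+μ; 1). (Probabilistically, the left side is P(X ≥ Y) for independent X ~ Beta(λ,λ') and Y ~ Beta(μ,μ').) -/

import Mathlib

open MeasureTheory
open Filter Set

/-- The beta function `B(a,b) = ∫₀¹ s^(a-1) (1-s)^(b-1) ds`. -/
noncomputable def betaFn (a b : ℝ) : ℝ := ∫ s in (0:ℝ)..1, s ^ (a - 1) * (1 - s) ^ (b - 1)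

/-- The regularized incomplete beta function `I(a,b;t)`. -/
noncomputable def regIncBeta (a b t : ℝ) : ℝ :=
  (betaFn a b)⁻¹ * ∫ s in (0:ℝ)..t, s ^ (a - 1) * (1 - s) ^ (b - 1)

/-- `ℬ(λ,λ',μ,μ',ν,ν') = (1/B(λ,λ')) ∫₀¹ t^(λ-1)(1-t)^(λ'-1) I(μ,μ';t) I(ν,ν';t) dt`. -/
noncomputable def calB (l l' m m' n n' : ℝ) : ℝ :=
  (betaFn l l')⁻¹ * ∫ t in (0:ℝ)..1,
    t ^ (l - 1) * (1 - t) ^ (l' - 1) * regIncBeta m m' t * regIncBeta n n' t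

/-- The Pochhammer symbol (rising factorial) `(a)_k = a(a+1)⋯(a+k-1)`. -/
noncomputable def poch (a : ℝ) (k : ℕ) : ℝ := ∏ i ∈ Finset.range k, (a + i)

/-- The hypergeometric value `₃F₂(a₁,a₂,a₃; b₁,b₂; 1)`. -/
noncomputable def F32 (a1 a2 a3 b1 b2 : ℝ) : ℝ :=
  ∑' k : ℕ, poch a1 k * poch a2 k * poch a3 k / (poch b1 k * poch b2 k * (Nat.factorial k))


lemma poch_zero (a : ℝ) : poch a 0 = 1 := by simp [poch]

lemma poch_succ (a : ℝ) (k : ℕ) : poch a (k+1) = poch a k * (a + k) := by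
  simp [poch, Finset.prod_range_succ]

lemma poch_pos {a : ℝ} (ha : 0 < a) (k : ℕ) : 0 < poch a k := by
  refine Finset.prod_pos fun i _ => by positivity

lemma poch_mul_add (a : ℝ) (k : ℕ) : a * poch (a+1) k = poch a k * (a + k) := by
  induction k with
  | zero => simp [poch_zero]
  | succ k ih =>
      rw [poch_succ, poch_succ, ← mul_assoc, ih]
      push_cast; ring

lemma abs_poch_succ (c : ℝ) (k : ℕ) : |poch c (k+1)| = |poch c k| * |c + k| := by
  rw [poch_succ, abs_mul]

-- betaFn basics via complex beta integral
lemma complex_betaIntegral_eq (a b : ℝ) :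
    Complex.betaIntegral a b = ((betaFn a b : ℝ) : ℂ) := by
  rw [Complex.betaIntegral, betaFn, ← intervalIntegral.integral_ofReal]
  refine intervalIntegral.integral_congr fun x hx => ?_
  rw [Set.uIcc_of_le (by norm_num : (0:ℝ) ≤ 1)] at hx
  have hx0 : (0:ℝ) ≤ x := hx.1
  have hx1 : (0:ℝ) ≤ 1 - x := by linarith [hx.2]
  rw [show ((a:ℂ)-1) = ((a-1:ℝ):ℂ) by push_cast; ring,
    show ((b:ℂ)-1) = ((b-1:ℝ):ℂ) by push_cast; ring,
    show (1 - (x:ℂ)) = ((1-x:ℝ):ℂ) by push_cast; ring,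
    ← Complex.ofReal_cpow hx0, ← Complex.ofReal_cpow hx1]
  push_cast
  ring

lemma betaFn_eq_Gamma {a b : ℝ} (ha : 0 < a) (hb : 0 < b) :
    betaFn a b = Real.Gamma a * Real.Gamma b / Real.Gamma (a+b) := by
  have h := Complex.Gamma_mul_Gamma_eq_betaIntegral
    (s := (a:ℂ)) (t := (b:ℂ)) (by simpa using ha) (by simpa using hb)
  rw [complex_betaIntegral_eq, Complex.Gamma_ofReal, Complex.Gamma_ofReal,
    ← Complex.ofReal_add, Complex.Gamma_ofReal, ← Complex.ofReal_mul, ← Complex.ofReal_mul]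
    at h
  have h' : Real.Gamma a * Real.Gamma b = Real.Gamma (a+b) * betaFn a b := by
    exact_mod_cast h
  have hG : Real.Gamma (a+b) ≠ 0 := (Real.Gamma_pos_of_pos (by linarith)).ne'
  field_simp [h']
  linarith [h']

lemma betaFn_pos {a b : ℝ} (ha : 0 < a) (hb : 0 < b) : 0 < betaFn a b := by
  rw [betaFn_eq_Gamma ha hb]
  have := Real.Gamma_pos_of_pos ha
  have := Real.Gamma_pos_of_pos hb
  have := Real.Gamma_pos_of_pos (show (0:ℝ) < a + b by linarith)
  positivity

lemma betaFn_succ {a b : ℝ} (ha : 0 < a) (hb : 0 < b) :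
    betaFn (a+1) b = a / (a + b) * betaFn a b := by
  have h1 : Real.Gamma (a+1) = a * Real.Gamma a := Real.Gamma_add_one ha.ne'
  have h2 : Real.Gamma (a+1+b) = (a+b) * Real.Gamma (a+b) := by
    rw [show a+1+b = (a+b)+1 by ring, Real.Gamma_add_one (by linarith)]
  rw [betaFn_eq_Gamma (by linarith) hb, betaFn_eq_Gamma ha hb, h1, h2]
  have hG : Real.Gamma (a+b) ≠ 0 := (Real.Gamma_pos_of_pos (by linarith)).ne'
  have hab : a + b ≠ 0 := by positivity
  field_simp

lemma betaFn_add_nat {a b : ℝ} (ha : 0 < a) (hb : 0 < b) (k : ℕ) :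
    betaFn (a + k) b * poch (a+b) k = betaFn a b * poch a k := by
  induction k with
  | zero => simp [poch_zero]
  | succ k ih =>
      have hak : (0:ℝ) < a + k := by positivity
      have habk : (0:ℝ) < a + b + k := by positivity
      have : betaFn (a + (k+1)) b = (a+k)/(a+k+b) * betaFn (a+k) b := by
        rw [show (a + (k+1) : ℝ) = (a + k) + 1 by push_cast; ring]
        exact betaFn_succ hak hb
      rw [poch_succ, poch_succ]
      push_cast
      rw [this]
      have h : (a+k)/(a+k+b) * betaFn (a+k) b * (poch (a+b) k * (a+b+k))
          = (betaFn (a+k) b * poch (a+b) k) * (a+k) * ((a+b+k) / (a+k+b)) := by ring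
      rw [h, show a+b+(k:ℝ) = a+(k:ℝ)+b by ring, div_self (by positivity), mul_one, ih]
      ring

-- integrability of the beta integrand
lemma beta_integrable {a b : ℝ} (ha : 0 < a) (hb : 0 < b) :
    IntervalIntegrable (fun s : ℝ => s ^ (a-1) * (1-s) ^ (b-1)) volume 0 1 := by
  have h := Complex.betaIntegral_convergent (u := (a:ℂ)) (v := (b:ℂ))
    (by simpa using ha) (by simpa using hb)
  rw [intervalIntegrable_iff] at h ⊢
  have h2 : IntegrableOn (fun x : ℝ => RCLike.re ((x:ℂ) ^ ((a:ℂ) - 1) * (1 - (x:ℂ)) ^ ((b:ℂ) - 1)))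
      (Set.uIoc (0:ℝ) 1) volume := h.re
  refine h2.congr_fun (fun x hx => ?_) measurableSet_uIoc
  rw [Set.uIoc_of_le (by norm_num : (0:ℝ) ≤ 1)] at hx
  have hx0 : (0:ℝ) ≤ x := le_of_lt hx.1
  have hx1 : (0:ℝ) ≤ 1 - x := by linarith [hx.2]
  have heq : ((x:ℂ) ^ ((a:ℂ) - 1) * (1 - (x:ℂ)) ^ ((b:ℂ) - 1))
      = (((x ^ (a-1) * (1-x) ^ (b-1) : ℝ)) : ℂ) := by
    rw [show ((a:ℂ)-1) = ((a-1:ℝ):ℂ) by push_cast; ring,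
      show ((b:ℂ)-1) = ((b-1:ℝ):ℂ) by push_cast; ring,
      show (1 - (x:ℂ)) = ((1-x:ℝ):ℂ) by push_cast; ring,
      ← Complex.ofReal_cpow hx0, ← Complex.ofReal_cpow hx1]
    push_cast
    ring
  simp [heq]


lemma summable_poch_mul_pow (c : ℝ) (j : ℕ) {x : ℝ} (h0 : 0 ≤ x) (h1 : x < 1) :
    Summable (fun k : ℕ => |poch c k| / k.factorial * ((k:ℝ)+1)^j * x ^ k) := by
  rcases eq_or_lt_of_le h0 with h|h
  · apply summable_of_ne_finset_zero (s := {0})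
    intro k hk
    simp only [Finset.mem_singleton] at hk
    simp [← h, zero_pow hk]
  set r := (x+1)/2 with hrdef
  have hxr : x < r := by rw [hrdef]; linarith
  have hr1 : r < 1 := by rw [hrdef]; linarith
  have T0 : Tendsto (fun k : ℕ => ((k:ℝ)+1)⁻¹) atTop (nhds 0) := by
    simpa [one_div] using tendsto_one_div_add_atTop_nhds_zero_nat (𝕜 := ℝ)
  have T1 : Tendsto (fun k : ℕ => |c + k| / ((k:ℝ)+1)) atTop (nhds 1) := by
    have e1 : Tendsto (fun k : ℕ => (c-1) * ((k:ℝ)+1)⁻¹ + 1) atTop (nhds 1) := by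
      simpa using (T0.const_mul (c-1)).add_const 1
    refine e1.congr' ?_
    filter_upwards [eventually_ge_atTop ⌈|c|⌉₊] with k hk
    have hck : 0 ≤ c + k := by
      have h1 : |c| ≤ (⌈|c|⌉₊ : ℝ) := Nat.le_ceil _
      have h2 : (⌈|c|⌉₊ : ℝ) ≤ k := by exact_mod_cast hk
      have := neg_abs_le c
      linarith
    rw [abs_of_nonneg hck]
    field_simp
    try ring
  have T2 : Tendsto (fun k : ℕ => (((k:ℝ)+2)/((k:ℝ)+1))^j) atTop (nhds 1) := by
    have e1 : Tendsto (fun k : ℕ => (1 + ((k:ℝ)+1)⁻¹)^j) atTop (nhds 1) := by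
      have := (T0.const_add 1).pow j
      simpa using this
    refine e1.congr fun k => ?_
    have h1 : ((k:ℝ)+1) ≠ 0 := by positivity
    rw [show ((k:ℝ)+2)/((k:ℝ)+1) = 1 + ((k:ℝ)+1)⁻¹ by field_simp; ring]
  have Tρ : Tendsto (fun k : ℕ => |c + k| / ((k:ℝ)+1) * (((k:ℝ)+2)/((k:ℝ)+1))^j * x)
      atTop (nhds x) := by
    simpa using (T1.mul T2).mul_const x
  have hev := Tρ.eventually_lt_const hxr
  apply summable_of_ratio_norm_eventually_le hr1
  filter_upwards [hev] with k hk
  have hfk : (0:ℝ) ≤ |poch c k| / k.factorial * ((k:ℝ)+1)^j * x ^ k := by positivity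
  have hfk1 : (0:ℝ) ≤ |poch c (k+1)| / (k+1).factorial * (((k:ℝ)+1)+1)^j * x ^ (k+1) := by
    positivity
  rw [Real.norm_eq_abs, Real.norm_eq_abs]
  push_cast
  rw [abs_of_nonneg (by exact_mod_cast hfk1), abs_of_nonneg hfk]
  have key : |poch c (k+1)| / (k+1).factorial * (((k:ℝ)+1)+1)^j * x ^ (k+1)
      = (|poch c k| / k.factorial * ((k:ℝ)+1)^j * x ^ k)
        * (|c + k| / ((k:ℝ)+1) * (((k:ℝ)+2)/((k:ℝ)+1))^j * x) := by
    rw [abs_poch_succ, Nat.factorial_succ, div_pow]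
    have h1 : ((k:ℝ)+1) ≠ 0 := by positivity
    have h2 : ((k.factorial : ℝ)) ≠ 0 := by exact_mod_cast k.factorial_ne_zero
    push_cast
    field_simp
    ring
  rw [key]
  have hρ0 : 0 ≤ |c + k| / ((k:ℝ)+1) * (((k:ℝ)+2)/((k:ℝ)+1))^j * x := by positivity
  calc _ ≤ (|poch c k| / k.factorial * ((k:ℝ)+1)^j * x ^ k) * r :=
        mul_le_mul_of_nonneg_left hk.le hfk
    _ = r * _ := mul_comm _ _

lemma summable_poch_deriv (c : ℝ) {r : ℝ} (h0 : 0 ≤ r) (h1 : r < 1) :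
    Summable (fun k : ℕ => |poch c k| / k.factorial * k * r ^ (k-1)) := by
  apply (summable_nat_add_iff 1).mp
  have base := (summable_poch_mul_pow c 1 h0 h1).mul_left (|c|+1)
  refine Summable.of_nonneg_of_le (fun k => by positivity) (fun k => ?_) base
  have e : |poch c (k+1)| / ((k+1).factorial : ℝ) * ((k+1:ℕ):ℝ) * r ^ ((k+1)-1)
      = |poch c k| / k.factorial * |c + k| * r ^ k := by
    rw [abs_poch_succ, Nat.factorial_succ]
    have h2 : ((k.factorial : ℝ)) ≠ 0 := by exact_mod_cast k.factorial_ne_zero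
    have h1 : ((k:ℝ)+1) ≠ 0 := by positivity
    push_cast
    field_simp
  push_cast at e ⊢
  rw [e]
  have hb : |c + k| ≤ (|c|+1) * ((k:ℝ)+1) := by
    have := abs_add_le c (k:ℝ)
    have hk : |(k:ℝ)| = k := abs_of_nonneg (by positivity)
    nlinarith [abs_nonneg c, (k:ℕ).cast_nonneg (α := ℝ)]
  calc |poch c k| / k.factorial * |c + k| * r ^ k
      ≤ |poch c k| / k.factorial * ((|c|+1) * ((k:ℝ)+1)) * r ^ k := by
        have h0' : (0:ℝ) ≤ |poch c k| / k.factorial := by positivity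
        have h0'' : (0:ℝ) ≤ r ^ k := by positivity
        gcongr
    _ = (|c|+1) * (|poch c k| / k.factorial * ((k:ℝ)+1)^1 * r ^ k) := by ring

lemma poch_decay {m' : ℝ} (hm' : 0 < m') :
    ∃ C : ℝ, 0 < C ∧ ∀ k : ℕ,
      |poch (1-m') k| / k.factorial ≤ C * ((k:ℝ)+1) ^ (-(min m' 1)) := by
  set ε := min m' 1 with hεdef
  have hε0 : 0 < ε := lt_min hm' one_pos
  have hε1 : ε ≤ 1 := min_le_right _ _
  have hεm : ε ≤ m' := min_le_left _ _
  set Q : ℕ → ℝ := fun k => |poch (1-m') k| / k.factorial * ((k:ℝ)+1) ^ (ε:ℝ) with hQdef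
  have hQ0 : ∀ k, 0 ≤ Q k := by
    intro k
    have : (0:ℝ) < ((k:ℝ)+1) ^ (ε:ℝ) := Real.rpow_pos_of_pos (by positivity) _
    positivity
  have step : ∀ k : ℕ, m' ≤ (k:ℝ)+1 → Q (k+1) ≤ Q k := by
    intro k hk
    have hpos : (0:ℝ) ≤ 1 - m' + k := by linarith
    have h1 : ((k:ℝ)+1) ≠ 0 := by positivity
    have hsplit : (((k:ℝ)+2)) ^ (ε:ℝ)
        = ((((k:ℝ)+2)/((k:ℝ)+1))) ^ (ε:ℝ) * (((k:ℝ)+1)) ^ (ε:ℝ) := by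
      rw [← Real.mul_rpow (by positivity) (by positivity)]
      congr 1
      field_simp
    have e : Q (k+1) = Q k * ((1-m'+k)/((k:ℝ)+1) * ((((k:ℝ)+2)/((k:ℝ)+1))) ^ (ε:ℝ)) := by
      have h2 : ((k.factorial : ℝ)) ≠ 0 := by exact_mod_cast k.factorial_ne_zero
      rw [hQdef]
      simp only
      rw [abs_poch_succ, abs_of_nonneg hpos, Nat.factorial_succ]
      push_cast
      rw [show ((k:ℝ)+1+1) = ((k:ℝ)+2) by ring, hsplit]
      field_simp
    have bound1 : (1-m'+k)/((k:ℝ)+1) ≤ 1 - ε/((k:ℝ)+1) := by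
      have hrw : (1 - ε/((k:ℝ)+1)) * ((k:ℝ)+1) = (k:ℝ)+1-ε := by field_simp
      rw [div_le_iff₀ (by positivity), hrw]
      linarith
    have bound2 : ((((k:ℝ)+2)/((k:ℝ)+1))) ^ (ε:ℝ) ≤ 1 + ε/((k:ℝ)+1) := by
      have hs : -1 ≤ ((k:ℝ)+1)⁻¹ := by
        have : (0:ℝ) ≤ ((k:ℝ)+1)⁻¹ := by positivity
        linarith
      have := rpow_one_add_le_one_add_mul_self hs hε0.le hε1
      have heq : ((k:ℝ)+2)/((k:ℝ)+1) = 1 + ((k:ℝ)+1)⁻¹ := by field_simp; ring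
      rw [heq]
      calc (1 + ((k:ℝ)+1)⁻¹) ^ (ε:ℝ) ≤ 1 + ε * ((k:ℝ)+1)⁻¹ := this
        _ = 1 + ε/((k:ℝ)+1) := by rw [div_eq_mul_inv]
    have hratio : (1-m'+k)/((k:ℝ)+1) * ((((k:ℝ)+2)/((k:ℝ)+1))) ^ (ε:ℝ) ≤ 1 := by
      have hL0 : 0 ≤ (1-m'+k)/((k:ℝ)+1) := div_nonneg hpos (by positivity)
      have hR0 : (0:ℝ) ≤ ((((k:ℝ)+2)/((k:ℝ)+1))) ^ (ε:ℝ) :=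
        Real.rpow_nonneg (by positivity) _
      have hd0 : 0 ≤ ε/((k:ℝ)+1) := div_nonneg hε0.le (by positivity)
      calc (1-m'+k)/((k:ℝ)+1) * ((((k:ℝ)+2)/((k:ℝ)+1))) ^ (ε:ℝ)
          ≤ (1 - ε/((k:ℝ)+1)) * (1 + ε/((k:ℝ)+1)) := by
            apply mul_le_mul bound1 bound2 hR0
            nlinarith [hεm, hk]
        _ = 1 - (ε/((k:ℝ)+1))^2 := by ring
        _ ≤ 1 := by nlinarith
    rw [e]
    exact mul_le_of_le_one_right (hQ0 k) hratio
  set K := ⌈m'⌉₊ with hKdef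
  have hmK : m' ≤ (K:ℝ) := Nat.le_ceil m'
  have mono : ∀ k, K ≤ k → Q k ≤ Q K := by
    intro k hk
    induction k, hk using Nat.le_induction with
    | base => exact le_refl _
    | succ k hKk ih =>
        refine le_trans (step k ?_) ih
        have : (K:ℝ) ≤ k := by exact_mod_cast hKk
        linarith
  set C := (∑ i ∈ Finset.range (K+1), Q i) + 1 with hCdef
  have hC0 : 0 < C := by
    have : 0 ≤ ∑ i ∈ Finset.range (K+1), Q i := Finset.sum_nonneg fun i _ => hQ0 i
    rw [hCdef]; linarith
  have hQC : ∀ k, Q k ≤ C := by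
    intro k
    rcases le_or_gt k K with h|h
    · have : Q k ≤ ∑ i ∈ Finset.range (K+1), Q i :=
        Finset.single_le_sum (fun i _ => hQ0 i) (Finset.mem_range.mpr (by omega))
      rw [hCdef]; linarith
    · have h1 : Q k ≤ Q K := mono k h.le
      have h2 : Q K ≤ ∑ i ∈ Finset.range (K+1), Q i :=
        Finset.single_le_sum (fun i _ => hQ0 i) (Finset.mem_range.mpr (by omega))
      rw [hCdef]; linarith
  refine ⟨C, hC0, fun k => ?_⟩
  have hP : (0:ℝ) < ((k:ℝ)+1) ^ (ε:ℝ) := Real.rpow_pos_of_pos (by positivity) _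
  have hq := hQC k
  rw [hQdef] at hq
  simp only at hq
  rw [Real.rpow_neg (by positivity : (0:ℝ) ≤ (k:ℝ)+1)]
  calc |poch (1-m') k| / k.factorial
      = (|poch (1-m') k| / k.factorial * ((k:ℝ)+1) ^ (ε:ℝ)) * (((k:ℝ)+1) ^ (ε:ℝ))⁻¹ := by
        field_simp
    _ ≤ C * (((k:ℝ)+1) ^ (ε:ℝ))⁻¹ := mul_le_mul_of_nonneg_right hq (inv_nonneg.mpr hP.le)


lemma summable_binom (c : ℝ) {y : ℝ} (hy : |y| < 1) :
    Summable (fun k : ℕ => poch c k / k.factorial * y ^ k) := by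
  apply Summable.of_norm
  refine ((summable_poch_mul_pow c 0 (abs_nonneg y) hy).congr fun k => ?_)
  rw [Real.norm_eq_abs, abs_mul, abs_div, abs_pow, Nat.abs_cast, pow_zero, mul_one]

lemma summable_binom_deriv (c : ℝ) {y : ℝ} (hy : |y| < 1) :
    Summable (fun k : ℕ => poch c k / k.factorial * ((k:ℝ) * y ^ (k-1))) := by
  apply Summable.of_norm
  refine ((summable_poch_deriv c (abs_nonneg y) hy).congr fun k => ?_)
  rw [Real.norm_eq_abs, abs_mul, abs_div, abs_mul, abs_pow, Nat.abs_cast, Nat.abs_cast,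
    mul_assoc]

lemma summable_binom_mul_linear (c d e : ℝ) {y : ℝ} (hy : |y| < 1) :
    Summable (fun k : ℕ => poch c k / k.factorial * ((d + e * k) * y ^ k)) := by
  apply Summable.of_norm
  have base := (summable_poch_mul_pow c 1 (abs_nonneg y) hy).mul_left (|d| + |e|)
  refine Summable.of_nonneg_of_le (fun k => norm_nonneg _) (fun k => ?_) base
  rw [Real.norm_eq_abs, abs_mul, abs_div, abs_mul, abs_pow, Nat.abs_cast]
  have h1 : |d + e * (k:ℝ)| ≤ (|d| + |e|) * ((k:ℝ)+1) := by
    calc |d + e * (k:ℝ)| ≤ |d| + |e| * (k:ℝ) := by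
          refine (abs_add_le _ _).trans ?_
          rw [abs_mul, Nat.abs_cast]
      _ ≤ (|d| + |e|) * ((k:ℝ)+1) := by
          have hk0 : (0:ℝ) ≤ (k:ℝ) := Nat.cast_nonneg k
          nlinarith [abs_nonneg d, abs_nonneg e]
  calc |poch c k| / k.factorial * (|d + e * k| * |y| ^ k)
      ≤ |poch c k| / k.factorial * ((|d| + |e|) * ((k:ℝ)+1) * |y| ^ k) := by
        have : (0:ℝ) ≤ |poch c k| / k.factorial := by positivity
        gcongr
    _ = (|d| + |e|) * (|poch c k| / k.factorial * ((k:ℝ)+1)^1 * |y| ^ k) := by ring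

lemma hasSum_binomial (c : ℝ) {x : ℝ} (h0 : 0 ≤ x) (h1 : x < 1) :
    HasSum (fun k : ℕ => poch c k / k.factorial * x ^ k) ((1 - x) ^ (-c)) := by
  rcases eq_or_lt_of_le h0 with h|hx0
  · have : ((1:ℝ) - x) ^ (-c) = poch c 0 / (Nat.factorial 0 : ℝ) * x ^ 0 := by
      rw [← h]
      simp [poch_zero]
    rw [this]
    refine hasSum_single 0 fun k hk => ?_
    rw [← h, zero_pow hk, mul_zero]
  · set r := (x+1)/2 with hrdef
    have hr0 : 0 < r := by rw [hrdef]; linarith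
    have hxr : x < r := by rw [hrdef]; linarith
    have hr1 : r < 1 := by rw [hrdef]; linarith
    set t : Set ℝ := Ioo (-r) r with htdef
    have ht_open : IsOpen t := isOpen_Ioo
    have ht_conn : IsPreconnected t := (convex_Ioo _ _).isPreconnected
    have h0t : (0:ℝ) ∈ t := ⟨by linarith, hr0⟩
    have hxt : x ∈ t := ⟨by linarith, hxr⟩
    have habs : ∀ y ∈ t, |y| < 1 := by
      intro y hy
      rw [abs_lt]
      exact ⟨by linarith [hy.1], by linarith [hy.2]⟩
    have hu := summable_poch_deriv c hr0.le hr1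
    have hderiv : ∀ y ∈ t, HasDerivAt (fun z => ∑' k : ℕ, poch c k / k.factorial * z^k)
        (∑' k : ℕ, poch c k / k.factorial * ((k:ℝ) * y^(k-1))) y := by
      intro y hy
      refine hasDerivAt_tsum_of_isPreconnected hu ht_open ht_conn
        (fun k z _ => ((hasDerivAt_pow k z).const_mul (poch c k / k.factorial))) ?_ h0t ?_ hy
      · intro k z hz
        rw [Real.norm_eq_abs, abs_mul, abs_div, abs_mul, abs_pow, Nat.abs_cast, Nat.abs_cast]
        have hzr : |z| ≤ r := (habs z hz |> fun _ => (abs_lt.mpr ⟨hz.1, hz.2⟩).le)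
        have : |z| ^ (k-1) ≤ r ^ (k-1) := pow_le_pow_left₀ (abs_nonneg z) hzr _
        calc |poch c k| / k.factorial * ((k:ℝ) * |z| ^ (k-1))
            ≤ |poch c k| / k.factorial * ((k:ℝ) * r ^ (k-1)) := by
              have : (0:ℝ) ≤ |poch c k| / k.factorial := by positivity
              gcongr
          _ = |poch c k| / k.factorial * (k:ℝ) * r ^ (k-1) := by ring
      · exact summable_binom c (by simpa using (habs 0 h0t))
    have keyODE : ∀ y ∈ t,
        (1-y) * (∑' k : ℕ, poch c k / k.factorial * ((k:ℝ) * y^(k-1)))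
          = c * ∑' k : ℕ, poch c k / k.factorial * y^k := by
      intro y hy
      have hy1 := habs y hy
      have SD := summable_binom_deriv c hy1
      have S1 : Summable (fun k : ℕ => poch c k / k.factorial * ((c + k) * y^k)) :=
        summable_binom_mul_linear c c 1 hy1 |>.congr fun k => by ring
      have S2 : Summable (fun k : ℕ => poch c k / k.factorial * ((k:ℝ) * y^k)) :=
        summable_binom_mul_linear c 0 1 hy1 |>.congr fun k => by ring
      have e1 : ∑' k : ℕ, poch c k / k.factorial * ((k:ℝ) * y^(k-1))
          = ∑' k : ℕ, poch c k / k.factorial * ((c + k) * y^k) := by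
        rw [SD.tsum_eq_zero_add]
        have h00 : poch c 0 / ((Nat.factorial 0 : ℕ):ℝ) * (((0:ℕ):ℝ) * y^((0:ℕ)-1)) = 0 := by
          simp
        rw [h00, zero_add]
        refine tsum_congr fun k => ?_
        rw [poch_succ, Nat.factorial_succ]
        have hkf : ((k.factorial:ℝ)) ≠ 0 := by exact_mod_cast k.factorial_ne_zero
        have hk1 : ((k:ℝ)+1) ≠ 0 := by positivity
        have hsub : (k+1) - 1 = k := rfl
        rw [hsub]
        push_cast
        field_simp
      have e2 : y * ∑' k : ℕ, poch c k / k.factorial * ((k:ℝ) * y^(k-1))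
          = ∑' k : ℕ, poch c k / k.factorial * ((k:ℝ) * y^k) := by
        rw [← tsum_mul_left]
        refine tsum_congr fun k => ?_
        cases k with
        | zero => simp
        | succ k =>
            have hsub : (k+1) - 1 = k := rfl
            rw [hsub, pow_succ]
            push_cast
            ring
      calc (1-y) * ∑' k : ℕ, poch c k / k.factorial * ((k:ℝ) * y^(k-1))
          = (∑' k : ℕ, poch c k / k.factorial * ((c + k) * y^k))
            - ∑' k : ℕ, poch c k / k.factorial * ((k:ℝ) * y^k) := by
            rw [sub_mul, one_mul, e2, e1]
        _ = ∑' k : ℕ, (poch c k / k.factorial * ((c + k) * y^k)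
              - poch c k / k.factorial * ((k:ℝ) * y^k)) := (S1.tsum_sub S2).symm
        _ = ∑' k : ℕ, c * (poch c k / k.factorial * y^k) := by
            refine tsum_congr fun k => ?_
            ring
        _ = c * ∑' k : ℕ, poch c k / k.factorial * y^k := tsum_mul_left
    have hΦ : ∀ y ∈ t, HasDerivAt
        (fun z => (∑' k : ℕ, poch c k / k.factorial * z^k) * (1-z)^c) 0 y := by
      intro y hy
      have h1y : 0 < 1 - y := by have := hy.2; simp only [htdef, mem_Ioo] at hy; linarith [hy.2, hr1]
      have hd1 := hderiv y hy
      have hid : HasDerivAt (fun z : ℝ => 1 - z) (-1) y := (hasDerivAt_id y).const_sub 1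
      have hd2 : HasDerivAt (fun z : ℝ => (1-z)^c) (c * (1-y)^(c-1) * (-1)) y := by
        have h := Real.hasDerivAt_rpow_const (x := 1-y) (p := c) (Or.inl h1y.ne')
        exact h.comp y hid
      have hmul := hd1.mul hd2
      have hpow : (1-y)^c = (1-y)^(c-1) * (1-y) := by
        have h := Real.rpow_add_one h1y.ne' (c-1)
        rw [sub_add_cancel] at h
        exact h
      refine hmul.congr_deriv ?_
      rw [hpow]
      have hode := keyODE y hy
      linear_combination (((1-y):ℝ)^(c-1)) * hode
    have hsubI : Icc (0:ℝ) x ⊆ t := by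
      intro z hz
      exact ⟨by linarith [hz.1], by linarith [hz.2]⟩
    have hconst := constant_of_has_deriv_right_zero
      (f := fun z => (∑' k : ℕ, poch c k / k.factorial * z^k) * (1-z)^c) (a := 0) (b := x)
      (fun z hz => ((hΦ z (hsubI hz)).continuousAt.continuousWithinAt))
      (fun z hz => ((hΦ z (hsubI (Ico_subset_Icc_self hz))).hasDerivWithinAt))
      x (right_mem_Icc.mpr h0)
    have G0 : (∑' k : ℕ, poch c k / k.factorial * (0:ℝ)^k) = 1 := by
      rw [tsum_eq_single 0 (fun k hk => by rw [zero_pow hk, mul_zero])]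
      simp [poch_zero]
    rw [G0] at hconst
    simp only [sub_zero, Real.one_rpow, one_mul, mul_one] at hconst
    have hcpos : (0:ℝ) < (1-x)^c := Real.rpow_pos_of_pos (by linarith) c
    have hGx : (∑' k : ℕ, poch c k / k.factorial * x^k) = ((1-x)^c)⁻¹ :=
      eq_inv_of_mul_eq_one_left hconst
    have := (summable_binom c (by rwa [abs_of_nonneg h0])).hasSum
    rw [hGx] at this
    rwa [Real.rpow_neg (by linarith : (0:ℝ) ≤ 1 - x)]


lemma hasSum_incBeta {m m' : ℝ} (hm : 0 < m) (hm' : 0 < m') {t : ℝ} (h0 : 0 ≤ t) (h1 : t < 1) :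
    HasSum (fun k : ℕ => poch (1-m') k / k.factorial / (m+(k:ℝ)) * t ^ (m+(k:ℝ)))
      (∫ s in (0:ℝ)..t, s ^ (m-1) * (1-s) ^ (m'-1)) := by
  rcases eq_or_lt_of_le h0 with h|h
  · subst h
    rw [intervalIntegral.integral_same]
    have hz : (fun k : ℕ => poch (1-m') k / k.factorial / (m+(k:ℝ)) * (0:ℝ) ^ (m+(k:ℝ)))
        = fun _ => (0:ℝ) := by
      funext k
      rw [Real.zero_rpow (by positivity : (0:ℝ) < m + (k:ℝ)).ne', mul_zero]
    rw [hz]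
    exact hasSum_zero
  · set c := 1 - m' with hcdef
    set f : ℕ → ℝ → ℝ := fun k s => poch c k / k.factorial * (s^(m-1) * s^k) with hfdef
    have hmeas : ∀ k, AEStronglyMeasurable (f k) (volume.restrict (Ioc (0:ℝ) t)) := by
      intro k
      have : Measurable (f k) := by
        rw [hfdef]
        measurability
      exact this.aestronglyMeasurable
    have hexp : ∀ k : ℕ, (-1:ℝ) < m - 1 + (k:ℝ) := by
      intro k
      have : (0:ℝ) ≤ (k:ℝ) := Nat.cast_nonneg k
      linarith
    have hIk : ∀ k : ℕ, ∫ s in Ioc (0:ℝ) t, s^(m-1) * s^k = t^(m+(k:ℝ))/(m+(k:ℝ)) := by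
      intro k
      have e : EqOn (fun s : ℝ => s^(m-1) * s^k) (fun s : ℝ => s^(m-1+(k:ℝ))) (Ioc 0 t) := by
        intro s hs
        simp only
        rw [Real.rpow_add hs.1, Real.rpow_natCast]
      rw [setIntegral_congr_fun measurableSet_Ioc e, ← intervalIntegral.integral_of_le h.le,
        integral_rpow (Or.inl (hexp k)),
        Real.zero_rpow (by linarith [hexp k] : (0:ℝ) < m - 1 + (k:ℝ) + 1).ne', sub_zero,
        show m-1+(k:ℝ)+1 = m+(k:ℝ) by ring]
    have hint : ∀ k, IntegrableOn (f k) (Ioc (0:ℝ) t) volume := by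
      intro k
      have rint : IntervalIntegrable (fun s : ℝ => s^(m-1+(k:ℝ))) volume 0 t :=
        intervalIntegral.intervalIntegrable_rpow' (hexp k)
      rw [intervalIntegrable_iff, uIoc_of_le h.le] at rint
      have e : EqOn (fun s : ℝ => s^(m-1+(k:ℝ))) (fun s : ℝ => s^(m-1) * s^k) (Ioc 0 t) := by
        intro s hs
        simp only
        rw [Real.rpow_add hs.1, Real.rpow_natCast]
      exact ((rint.congr_fun e measurableSet_Ioc).const_mul _)
    set w : ℕ → ℝ := fun k => |poch c k| / k.factorial * (t^(m+(k:ℝ))/(m+(k:ℝ))) with hwdef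
    have hw0 : ∀ k, 0 ≤ w k := by
      intro k
      have : (0:ℝ) ≤ t^(m+(k:ℝ)) := Real.rpow_nonneg h.le _
      positivity
    have hsw : Summable w := by
      have base := (summable_poch_mul_pow c 0 h.le h1).mul_left (t^m * m⁻¹)
      refine Summable.of_nonneg_of_le hw0 (fun k => ?_) base
      have he : t^(m+(k:ℝ)) = t^m * t^k := by
        rw [Real.rpow_add h, Real.rpow_natCast]
      rw [hwdef]
      simp only
      rw [he]
      have h1' : t^m * t^k / (m+(k:ℝ)) ≤ t^m * t^k / m := by
        apply div_le_div_of_nonneg_left ?_ hm (by linarith [Nat.cast_nonneg (α := ℝ) k])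
        have : (0:ℝ) ≤ t^m := Real.rpow_nonneg h.le _
        positivity
      calc |poch c k| / k.factorial * (t^m * t^k / (m+(k:ℝ)))
          ≤ |poch c k| / k.factorial * (t^m * t^k / m) := by
            have : (0:ℝ) ≤ |poch c k| / k.factorial := by positivity
            gcongr
        _ = t^m * m⁻¹ * (|poch c k| / k.factorial * ((k:ℝ)+1)^0 * t^k) := by
            rw [pow_zero]
            ring
    have hnormint : ∀ k, ∫ s in Ioc (0:ℝ) t, ‖f k s‖ = w k := by
      intro k
      have e : EqOn (fun s : ℝ => ‖f k s‖)
          (fun s : ℝ => |poch c k / k.factorial| * (s^(m-1) * s^k)) (Ioc 0 t) := by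
        intro s hs
        simp only [hfdef, Real.norm_eq_abs, abs_mul]
        congr 1
        have h1' : (0:ℝ) ≤ s^(m-1) := Real.rpow_nonneg hs.1.le _
        have h2' : (0:ℝ) ≤ s^k := pow_nonneg hs.1.le _
        rw [abs_of_nonneg h1', abs_of_nonneg h2']
      rw [setIntegral_congr_fun measurableSet_Ioc e, integral_const_mul, hIk k, hwdef]
      simp only
      rw [abs_div, Nat.abs_cast]
    have hfin : ∑' k, ∫⁻ s in Ioc (0:ℝ) t, ‖f k s‖₊ ≠ ⊤ := by
      have : ∀ k, ∫⁻ s in Ioc (0:ℝ) t, ‖f k s‖₊ = ENNReal.ofReal (w k) := by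
        intro k
        simp only [← enorm_eq_nnnorm]
        rw [ ← ofReal_integral_norm_eq_lintegral_enorm (hint k), hnormint k]
      rw [tsum_congr this, ← ENNReal.ofReal_tsum_of_nonneg hw0 hsw]
      exact ENNReal.ofReal_ne_top
    have hit := integral_tsum hmeas hfin
    have hterm : ∀ k, ∫ s in Ioc (0:ℝ) t, f k s
        = poch c k / k.factorial / (m+(k:ℝ)) * t ^ (m+(k:ℝ)) := by
      intro k
      rw [hfdef]
      simp only
      rw [integral_const_mul, hIk k]
      ring
    have hptw : EqOn (fun s : ℝ => ∑' k, f k s) (fun s : ℝ => s ^ (m-1) * (1-s) ^ (m'-1))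
        (Ioc 0 t) := by
      intro s hs
      simp only
      have hb := hasSum_binomial c hs.1.le (lt_of_le_of_lt hs.2 h1)
      have : (-(c:ℝ)) = m' - 1 := by rw [hcdef]; ring
      rw [this] at hb
      have hb2 := hb.mul_left (s^(m-1))
      rw [← hb2.tsum_eq]
      refine tsum_congr fun k => ?_
      rw [hfdef]
      simp only
      ring
    have hgsum : Summable (fun k : ℕ => poch c k / k.factorial / (m+(k:ℝ)) * t ^ (m+(k:ℝ))) := by
      apply Summable.of_norm
      refine Summable.of_nonneg_of_le (fun k => norm_nonneg _) (fun k => ?_) hsw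
      rw [Real.norm_eq_abs, abs_mul, abs_div, abs_div, Nat.abs_cast, hwdef]
      simp only
      rw [abs_of_nonneg (by positivity : (0:ℝ) ≤ m + (k:ℝ)),
        abs_of_nonneg (Real.rpow_nonneg h.le _)]
      exact le_of_eq (by ring)
    have hfinal : (∑' k : ℕ, poch c k / k.factorial / (m+(k:ℝ)) * t ^ (m+(k:ℝ)))
        = ∫ s in (0:ℝ)..t, s ^ (m-1) * (1-s) ^ (m'-1) := by
      rw [intervalIntegral.integral_of_le h.le, ← setIntegral_congr_fun measurableSet_Ioc hptw,
        hit]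
      exact (tsum_congr hterm).symm
    have := hgsum.hasSum
    rwa [hfinal] at this


lemma beta_integrableOn {a b : ℝ} (ha : 0 < a) (hb : 0 < b) :
    IntegrableOn (fun s : ℝ => s ^ (a-1) * (1-s) ^ (b-1)) (Ioc (0:ℝ) 1) volume := by
  have h := beta_integrable ha hb
  rwa [intervalIntegrable_iff, uIoc_of_le (by norm_num : (0:ℝ) ≤ 1)] at h

lemma betaFn_eq_setIntegral (a b : ℝ) :
    betaFn a b = ∫ s in Ioc (0:ℝ) 1, s ^ (a-1) * (1-s) ^ (b-1) := by
  rw [betaFn, intervalIntegral.integral_of_le (by norm_num : (0:ℝ) ≤ 1)]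

lemma betaFn_mono {a a2 b : ℝ} (ha : 0 < a) (hb : 0 < b) (h : a ≤ a2) :
    betaFn a2 b ≤ betaFn a b := by
  rw [betaFn_eq_setIntegral, betaFn_eq_setIntegral]
  refine setIntegral_mono_on (beta_integrableOn (lt_of_lt_of_le ha h) hb)
    (beta_integrableOn ha hb) measurableSet_Ioc (fun t ht => ?_)
  have h1 : t ^ (a2-1) ≤ t ^ (a-1) :=
    Real.rpow_le_rpow_of_exponent_ge ht.1 ht.2 (by linarith)
  have h2 : (0:ℝ) ≤ (1-t) ^ (b-1) := Real.rpow_nonneg (by linarith [ht.2]) _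
  exact mul_le_mul_of_nonneg_right h1 h2

lemma summable_decay_aux {e : ℝ} (he : 0 < e) :
    Summable (fun k : ℕ => ((k:ℝ)+1) ^ (-(1+e))) := by
  have h := (Real.summable_nat_rpow_inv (p := 1+e)).mpr (by linarith)
  have h2 := (summable_nat_add_iff 1).mpr h
  refine h2.congr fun k => ?_
  push_cast
  rw [Real.rpow_neg (by positivity)]

lemma hasSum_outer {l l' m m' : ℝ} (hl : 0 < l) (hl' : 0 < l') (hm : 0 < m) (hm' : 0 < m') :
    HasSum (fun k : ℕ => poch (1-m') k / k.factorial / (m+(k:ℝ)) * betaFn (l+m+(k:ℝ)) l')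
      (∫ t in (0:ℝ)..1, t ^ (l-1) * (1-t) ^ (l'-1) *
        ∫ s in (0:ℝ)..t, s ^ (m-1) * (1-s) ^ (m'-1)) := by
  set c := 1 - m' with hcdef
  set F : ℕ → ℝ → ℝ := fun k t =>
    poch c k / k.factorial / (m+(k:ℝ)) * (t ^ ((l+m+(k:ℝ))-1) * (1-t) ^ (l'-1)) with hFdef
  have hlmk : ∀ k : ℕ, (0:ℝ) < l + m + (k:ℝ) := by
    intro k
    have : (0:ℝ) ≤ (k:ℝ) := Nat.cast_nonneg k
    linarith
  have hmeas : ∀ k, AEStronglyMeasurable (F k) (volume.restrict (Ioo (0:ℝ) 1)) := by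
    intro k
    have h1 : Measurable (fun x : ℝ => x ^ ((l+m+(k:ℝ))-1)) := by measurability
    have h2 : Measurable (fun x : ℝ => x ^ (l'-1)) := by measurability
    have : Measurable (F k) :=
      ((h1.mul (h2.comp (measurable_const.sub measurable_id))).const_mul _)
    exact this.aestronglyMeasurable
  have hint : ∀ k, IntegrableOn (F k) (Ioo (0:ℝ) 1) volume := by
    intro k
    exact (((beta_integrableOn (hlmk k) hl').mono_set Ioo_subset_Ioc_self).const_mul _)
  have hIk : ∀ k : ℕ, ∫ t in Ioo (0:ℝ) 1, t ^ ((l+m+(k:ℝ))-1) * (1-t) ^ (l'-1)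
      = betaFn (l+m+(k:ℝ)) l' := by
    intro k
    rw [← integral_Ioc_eq_integral_Ioo, ← betaFn_eq_setIntegral]
  set w : ℕ → ℝ := fun k => |poch c k| / k.factorial / (m+(k:ℝ)) * betaFn (l+m+(k:ℝ)) l'
    with hwdef
  have hBpos : ∀ k : ℕ, 0 < betaFn (l+m+(k:ℝ)) l' := fun k => betaFn_pos (hlmk k) hl'
  have hw0 : ∀ k, 0 ≤ w k := by
    intro k
    have h1 := (hBpos k).le
    have h2 : (0:ℝ) < m + (k:ℝ) := by positivity
    positivity
  have hsw : Summable w := by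
    obtain ⟨C, hC0, hC⟩ := poch_decay hm'
    have he0 : 0 < min m' 1 := lt_min hm' one_pos
    have base := (summable_decay_aux he0).mul_left (C * ((m+1)/m) * betaFn (l+m) l')
    refine Summable.of_nonneg_of_le hw0 (fun k => ?_) base
    have hmk : (0:ℝ) < m + (k:ℝ) := by positivity
    have hk0 : (0:ℝ) ≤ (k:ℝ) := Nat.cast_nonneg k
    have hb1 : betaFn (l+m+(k:ℝ)) l' ≤ betaFn (l+m) l' := by
      refine betaFn_mono (by linarith) hl' (by linarith)
    have hb2 : (m+(k:ℝ))⁻¹ ≤ (m+1)/m * ((k:ℝ)+1)⁻¹ := by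
      have h2 : (m+(k:ℝ))⁻¹ ≤ (m+1)/(m*((k:ℝ)+1)) := by
        rw [inv_eq_one_div, div_le_div_iff₀ hmk (by positivity)]
        nlinarith
      have h3 : (m+1)/(m*((k:ℝ)+1)) = (m+1)/m * ((k:ℝ)+1)⁻¹ := by
        rw [div_mul_eq_div_div, div_eq_mul_inv]
      rwa [h3] at h2
    calc w k = (|poch c k|/k.factorial) * ((m+(k:ℝ))⁻¹) * betaFn (l+m+(k:ℝ)) l' := by
          simp only [hwdef]
          ring
      _ ≤ (C * ((k:ℝ)+1)^(-(min m' 1))) * ((m+1)/m * ((k:ℝ)+1)⁻¹) * betaFn (l+m) l' := by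
          apply mul_le_mul (mul_le_mul (hC k) hb2 (inv_nonneg.mpr hmk.le) ?_)
            hb1 (hBpos k).le ?_
          · have : (0:ℝ) < ((k:ℝ)+1)^(-(min m' 1)) := Real.rpow_pos_of_pos (by positivity) _
            positivity
          · have : (0:ℝ) < ((k:ℝ)+1)^(-(min m' 1)) := Real.rpow_pos_of_pos (by positivity) _
            positivity
      _ = C * ((m+1)/m) * betaFn (l+m) l' * (((k:ℝ)+1)^(-(min m' 1)) * ((k:ℝ)+1)⁻¹) := by
          ring
      _ = C * ((m+1)/m) * betaFn (l+m) l' * ((k:ℝ)+1)^(-(1+min m' 1)) := by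
          congr 1
          rw [← Real.rpow_neg_one (((k:ℝ)+1)), ← Real.rpow_add (by positivity)]
          congr 1
          ring
  have hnormint : ∀ k, ∫ t in Ioo (0:ℝ) 1, ‖F k t‖ = w k := by
    intro k
    have e : EqOn (fun t : ℝ => ‖F k t‖)
        (fun t : ℝ => |poch c k / k.factorial / (m+(k:ℝ))|
          * (t ^ ((l+m+(k:ℝ))-1) * (1-t) ^ (l'-1))) (Ioo 0 1) := by
      intro t ht
      simp only [hFdef, Real.norm_eq_abs, abs_mul]
      congr 1
      rw [abs_of_nonneg (Real.rpow_nonneg ht.1.le _),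
        abs_of_nonneg (Real.rpow_nonneg (by linarith [ht.2] : (0:ℝ) ≤ 1 - t) _)]
    rw [setIntegral_congr_fun measurableSet_Ioo e, integral_const_mul, hIk k, hwdef]
    simp only
    rw [abs_div, abs_div, Nat.abs_cast, abs_of_nonneg (by positivity : (0:ℝ) ≤ m+(k:ℝ))]
  have hfin : ∑' k, ∫⁻ t in Ioo (0:ℝ) 1, ‖F k t‖₊ ≠ ⊤ := by
    have he : ∀ k, ∫⁻ t in Ioo (0:ℝ) 1, ‖F k t‖₊ = ENNReal.ofReal (w k) := fun k => by
      simp only [← enorm_eq_nnnorm]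
      rw [ ← ofReal_integral_norm_eq_lintegral_enorm (hint k), hnormint k]
    rw [tsum_congr he, ← ENNReal.ofReal_tsum_of_nonneg hw0 hsw]
    exact ENNReal.ofReal_ne_top
  have hit := integral_tsum hmeas hfin
  have hterm : ∀ k, ∫ t in Ioo (0:ℝ) 1, F k t
      = poch c k / k.factorial / (m+(k:ℝ)) * betaFn (l+m+(k:ℝ)) l' := by
    intro k
    rw [hFdef]
    simp only
    rw [integral_const_mul, hIk k]
  have hptw : EqOn (fun t : ℝ => ∑' k, F k t)
      (fun t : ℝ => t ^ (l-1) * (1-t) ^ (l'-1)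
        * ∫ s in (0:ℝ)..t, s ^ (m-1) * (1-s) ^ (m'-1)) (Ioo 0 1) := by
    intro t ht
    simp only
    have hin := hasSum_incBeta hm hm' ht.1.le ht.2
    have hb2 := hin.mul_left (t ^ (l-1) * (1-t) ^ (l'-1))
    rw [← hb2.tsum_eq]
    refine tsum_congr fun k => ?_
    rw [hFdef]
    simp only
    have he : t ^ ((l+m+(k:ℝ))-1) = t ^ (l-1) * t^(m+(k:ℝ)) := by
      rw [← Real.rpow_add ht.1]
      congr 1
      ring
    rw [he]
    ring
  have hgsum : Summable
      (fun k : ℕ => poch c k / k.factorial / (m+(k:ℝ)) * betaFn (l+m+(k:ℝ)) l') := by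
    apply Summable.of_norm
    refine hsw.congr fun k => ?_
    simp only [hwdef]
    rw [Real.norm_eq_abs, abs_mul, abs_div, abs_div, Nat.abs_cast,
      abs_of_nonneg (by positivity : (0:ℝ) ≤ m+(k:ℝ)), abs_of_nonneg (hBpos k).le]
  have hfinal : (∑' k : ℕ, poch c k / k.factorial / (m+(k:ℝ)) * betaFn (l+m+(k:ℝ)) l')
      = ∫ t in (0:ℝ)..1, t ^ (l-1) * (1-t) ^ (l'-1)
        * ∫ s in (0:ℝ)..t, s ^ (m-1) * (1-s) ^ (m'-1) := by
    rw [intervalIntegral.integral_of_le (by norm_num : (0:ℝ) ≤ 1),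
      integral_Ioc_eq_integral_Ioo, ← setIntegral_congr_fun measurableSet_Ioo hptw, hit]
    exact (tsum_congr hterm).symm
  have hh := hgsum.hasSum
  rwa [hfinal] at hh

/-- `P(X ≥ Y)` for independent `X ~ Beta(λ,λ')`, `Y ~ Beta(μ,μ')` in
closed hypergeometric form. -/
theorem stmt8 (l l' m m' : ℝ) (hl : 0 < l) (hl' : 0 < l') (hm : 0 < m)
    (hm' : 0 < m') :
    (betaFn l l')⁻¹ *
        ∫ t in (0:ℝ)..1, t ^ (l - 1) * (1 - t) ^ (l' - 1) * regIncBeta m m' t =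
      betaFn (l + m) l' / (m * betaFn l l' * betaFn m m') *
        F32 (1 - m') m (l + m) (m + 1) (l + l' + m) := by
  have hBl := betaFn_pos hl hl'
  have hBm := betaFn_pos hm hm'
  have hB0 : 0 < betaFn (l + m) l' := betaFn_pos (by linarith) hl'
  have hout := hasSum_outer hl hl' hm hm'
  have e1 : (fun t : ℝ => t ^ (l - 1) * (1 - t) ^ (l' - 1) * regIncBeta m m' t)
      = fun t : ℝ => (betaFn m m')⁻¹ * (t ^ (l - 1) * (1 - t) ^ (l' - 1)
        * ∫ s in (0:ℝ)..t, s ^ (m-1) * (1-s) ^ (m'-1)) := by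
    funext t
    rw [regIncBeta]
    ring
  rw [e1, intervalIntegral.integral_const_mul, ← hout.tsum_eq, F32, ← tsum_mul_left,
    ← tsum_mul_left, ← tsum_mul_left]
  refine tsum_congr fun k => ?_
  have hmk : (0:ℝ) < m + (k:ℝ) := by positivity
  have hPm := poch_pos hm k
  have hPm1 := poch_pos (show (0:ℝ) < m + 1 by linarith) k
  have hPll := poch_pos (show (0:ℝ) < l + l' + m by linarith) k
  have hkf : ((k.factorial:ℝ)) ≠ 0 := by exact_mod_cast k.factorial_ne_zero
  have h1 : betaFn (l + m + (k:ℝ)) l' * poch (l+l'+m) k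
      = betaFn (l+m) l' * poch (l+m) k := by
    have hh := betaFn_add_nat (show (0:ℝ) < l + m by linarith) hl' k
    rwa [show (l+m)+l' = l+l'+m by ring] at hh
  have h2 := poch_mul_add m k
  have hBk : betaFn (l + m + (k:ℝ)) l'
      = betaFn (l+m) l' * poch (l+m) k / poch (l+l'+m) k := by
    rw [eq_div_iff hPll.ne']
    exact h1
  have hmk2 : m + (k:ℝ) = m * poch (m+1) k / poch m k := by
    rw [eq_div_iff hPm.ne']
    linarith [h2]
  rw [hBk, hmk2]
  field_simp
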